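/- Let ≻ be a strict total consistent order on k-subsets of [n], and let a ≻ b ≻ c be players. If (S,T) is a subset-team witness for b ≻ c (i.e., S a (k-1)-subset, T a k-subset, both in [n]\{b,c}, disjoint, with S∪{b} ≻ T ≻ S∪{c}), then either (π(S), π(T)) is a subset-team witness for a ≻ c, or (in case a ∈ T) (S, T\{a}) is a subsets witness for a ≻ c. -/

import Mathlib

/-- The permutation on subsets exchanging players `a` and `b`. -/
def swapSet {n : ℕ} (a b : Fin n) (A : Finset (Fin n)) : Finset (Fin n) :=
  if a ∈ A ∧ b ∉ A then insert b (A.erase a)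
  else if b ∈ A ∧ a ∉ A then insert a (A.erase b)
  else A

/-- if a ≻ b ≻ c and (S,T) is a subset-team witness for b ≻ c, then
either (π(S),π(T)) is a subset-team witness for a ≻ c, or (when a ∈ T)
(S, T\{a}) is a subsets witness for a ≻ c. -/
theorem stmt5 (n k : ℕ) (hk : 1 ≤ k) (hkn : 2*k ≤ n)
    (succ : Finset (Fin n) → Finset (Fin n) → Prop)
    (htrans : ∀ A B C, succ A B → succ B C → succ A C)
    (hasym : ∀ A B, succ A B → ¬ succ B A)
    (htotal : ∀ A B : Finset (Fin n), A.card = k → B.card = k → A ≠ B →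
      (succ A B ∨ succ B A))
    (hcons : ∀ x y : Fin n, x ≠ y →
      (∀ S : Finset (Fin n), S.card = k-1 → x ∉ S → y ∉ S → succ (insert x S) (insert y S)) ∨
      (∀ S : Finset (Fin n), S.card = k-1 → x ∉ S → y ∉ S → succ (insert y S) (insert x S)))
    (a b c : Fin n) (hab : a ≠ b) (hbc : b ≠ c) (hac : a ≠ c)
    (hdomab : ∀ S : Finset (Fin n), S.card = k-1 → a ∉ S → b ∉ S →
      succ (insert a S) (insert b S))
    (hdombc : ∀ S : Finset (Fin n), S.card = k-1 → b ∉ S → c ∉ S →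
      succ (insert b S) (insert c S))
    (S T : Finset (Fin n))
    (hS : S.card = k-1) (hT : T.card = k)
    (hbS : b ∉ S) (hcS : c ∉ S) (hbT : b ∉ T) (hcT : c ∉ T)
    (hdisj : Disjoint S T)
    (hw1 : succ (insert b S) T)
    (hw2 : succ T (insert c S)) :
    ((swapSet a b S).card = k-1 ∧ (swapSet a b T).card = k ∧
      a ∉ swapSet a b S ∧ c ∉ swapSet a b S ∧
      a ∉ swapSet a b T ∧ c ∉ swapSet a b T ∧
      Disjoint (swapSet a b S) (swapSet a b T) ∧
      succ (insert a (swapSet a b S)) (swapSet a b T) ∧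
      succ (swapSet a b T) (insert c (swapSet a b S))) ∨
    (a ∈ T ∧
      S.card = k-1 ∧ (T.erase a).card = k-1 ∧
      a ∉ S ∧ c ∉ S ∧ a ∉ T.erase a ∧ c ∉ T.erase a ∧
      Disjoint S (T.erase a) ∧
      succ (insert a S) (insert c (T.erase a)) ∧
      succ (insert a (T.erase a)) (insert c S)) := by
  -- a dominates c in single exchanges
  have hdomac : ∀ R : Finset (Fin n), R.card = k-1 → a ∉ R → c ∉ R →
      succ (insert a R) (insert c R) := by
    rcases hcons a c hac with h | h
    · exact h
    · exfalso
      have hcard3 : ({a, b, c} : Finset (Fin n)).card = 3 := by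
        rw [Finset.card_insert_of_notMem (by simp [hab, hac]),
          Finset.card_insert_of_notMem (by simp [hbc]), Finset.card_singleton]
      have hle : k - 1 ≤ (Finset.univ \ {a, b, c} : Finset (Fin n)).card := by
        rw [Finset.card_sdiff_of_subset (Finset.subset_univ _), hcard3, Finset.card_univ,
          Fintype.card_fin]
        omega
      obtain ⟨S0, hsub, hcard⟩ := Finset.exists_subset_card_eq hle
      have haS0 : a ∉ S0 := fun hm => by have := hsub hm; simp at this
      have hbS0 : b ∉ S0 := fun hm => by have := hsub hm; simp at this
      have hcS0 : c ∉ S0 := fun hm => by have := hsub hm; simp at this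
      exact hasym _ _ (htrans _ _ _ (hdomab S0 hcard haS0 hbS0)
        (hdombc S0 hcard hbS0 hcS0)) (h S0 hcard haS0 hcS0)
  by_cases haT : a ∈ T
  · -- second disjunct
    have haS : a ∉ S := fun hm => Finset.disjoint_left.mp hdisj hm haT
    have hTe : insert a (T.erase a) = T := Finset.insert_erase haT
    have hcTe : c ∉ T.erase a := fun hm => hcT (Finset.mem_of_mem_erase hm)
    have hcardTe : (T.erase a).card = k - 1 := by
      rw [Finset.card_erase_of_mem haT, hT]
    refine Or.inr ⟨haT, hS, hcardTe, haS, hcS, Finset.notMem_erase _ _, hcTe,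
      hdisj.mono_right (Finset.erase_subset _ _), ?_, ?_⟩
    · have h1 := hdomac (T.erase a) hcardTe (Finset.notMem_erase _ _) hcTe
      rw [hTe] at h1
      exact htrans _ _ _ (hdomab S hS haS hbS) (htrans _ _ _ hw1 h1)
    · rw [hTe]; exact hw2
  · have hswT : swapSet a b T = T := by simp [swapSet, haT, hbT]
    by_cases haS : a ∈ S
    · -- swapped S
      have hswS : swapSet a b S = insert b (S.erase a) := by simp [swapSet, haS, hbS]
      have hk2 : 1 ≤ k - 1 := hS ▸ Finset.card_pos.mpr ⟨a, haS⟩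
      have hbE : b ∉ S.erase a := fun hm => hbS (Finset.mem_of_mem_erase hm)
      have hcE : c ∉ S.erase a := fun hm => hcS (Finset.mem_of_mem_erase hm)
      refine Or.inl ⟨?_, ?_, ?_, ?_, ?_, ?_, ?_, ?_, ?_⟩
      · rw [hswS, Finset.card_insert_of_notMem hbE, Finset.card_erase_of_mem haS, hS]
        omega
      · rw [hswT, hT]
      · rw [hswS]; simp [hab, Finset.notMem_erase]
      · rw [hswS]; simp [hbc.symm, hcE]
      · rwa [hswT]
      · rwa [hswT]
      · rw [hswS, hswT]
        exact Finset.disjoint_insert_left.mpr ⟨hbT, hdisj.mono_left (Finset.erase_subset _ _)⟩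
      · rw [hswS, hswT, Finset.insert_comm, Finset.insert_erase haS]
        exact hw1
      · rw [hswS, hswT]
        have heq : insert a (insert c (S.erase a)) = insert c S := by
          rw [Finset.insert_comm, Finset.insert_erase haS]
        have hRcard : (insert c (S.erase a)).card = k - 1 := by
          rw [Finset.card_insert_of_notMem hcE, Finset.card_erase_of_mem haS, hS]
          omega
        have haR : a ∉ insert c (S.erase a) := by
          simp [hac, Finset.notMem_erase]
        have hbR : b ∉ insert c (S.erase a) := by simp [hbc, hbE]
        have h1 := hdomab _ hRcard haR hbR
        rw [heq] at h1
        rw [Finset.insert_comm]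
        exact htrans _ _ _ hw2 h1
    · -- nothing moves
      have hswS : swapSet a b S = S := by simp [swapSet, haS, hbS]
      rw [hswS, hswT]
      exact Or.inl ⟨hS, hT, haS, hcS, haT, hcT, hdisj,
        htrans _ _ _ (hdomab S hS haS hbS) hw1, hw2⟩
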